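/- (Finite-alphabet sample complexity of the Chow-Liu algorithm.) Let X = (X_1, …, X_p) have finite support (|X| < ∞) and a tree-structured distribution p(·) ∈ P_T(c_1, c_2) with respect to a tree T on p ≥ 3 nodes, satisfying Assumptions 1 and 2. Fix δ ∈ (0, 1). There exists a constant C > 0, independent of δ, such that if the number n of i.i.d. samples of X satisfies n / (log_2 n)² ≥ 72 log(p/δ) / ( I^o − C/√n )² and I^o > C/√n, then the Chow-Liu algorithm applied to the n samples returns T^CL = T with probability at least 1 − δ. -/

import Mathlib

set_option linter.unusedSectionVars false

open scoped Classical

noncomputable section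

namespace TreePaper

/-- `f` is a probability mass function. -/
def IsProbDist {α : Type*} (f : α → ℝ) : Prop :=
  (∀ a, 0 ≤ f a) ∧ ∑' a, f a = 1

/-- Shannon entropy (base 2) of a pmf, with the convention `0 · log 0 = 0`. -/
def ent {α : Type*} (f : α → ℝ) : ℝ := -∑' a, f a * Real.logb 2 (f a)

variable {V : Type*} [Fintype V] [DecidableEq V] {A : Type*}

/-- Marginal pmf of the coordinate `i`. -/
def marg1 (P : (V → A) → ℝ) (i : V) : A → ℝ :=
  fun a => ∑' x : V → A, if x i = a then P x else 0

/-- Joint pmf of the pair of coordinates `(i, j)`. -/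
def marg2 (P : (V → A) → ℝ) (i j : V) : A × A → ℝ :=
  fun ab => ∑' x : V → A, if x i = ab.1 ∧ x j = ab.2 then P x else 0

theorem marg2_symm (P : (V → A) → ℝ) (i j : V) (a b : A) :
    marg2 P i j (a, b) = marg2 P j i (b, a) :=
  tsum_congr fun _ => if_congr and_comm rfl rfl

/-- Mutual information (in bits) between the coordinates `i` and `j`,
`I(X_i; X_j) = H(X_i) + H(X_j) − H(X_i, X_j)`. -/
def mi (P : (V → A) → ℝ) (i j : V) : ℝ :=
  ent (marg1 P i) + ent (marg1 P j) - ent (marg2 P i j)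

/-- The factor attached to an edge in the tree factorization of a Markov random field. -/
def edgeFactor (P : (V → A) → ℝ) (x : V → A) : Sym2 V → ℝ :=
  Sym2.lift ⟨fun i j => marg2 P i j (x i, x j) / (marg1 P i (x i) * marg1 P j (x j)),
    fun i j => by
      dsimp only
      rw [marg2_symm P i j (x i) (x j), mul_comm (marg1 P i (x i)) (marg1 P j (x j))]⟩

/-- The distribution `P` is Markov with respect to (i.e. factorizes according to)
the tree `T`:  `p(x) = ∏_i p(x_i) ∏_{(i,j) ∈ E} p(x_i, x_j) / (p(x_i) p(x_j))`. -/
def IsMarkovTree (T : SimpleGraph V) (P : (V → A) → ℝ) : Prop :=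
  ∀ x : V → A,
    P x = (∏ i, marg1 P i (x i)) *
      ∏ e : Sym2 V, if e ∈ T.edgeSet then edgeFactor P x e else 1

/-- The tuple `(s(w, w̄), u, ū)` lies in the feasibility set `EV²`:  `s(w, w̄)` is an
edge of `T` lying on the unique path of `T` from `u` to `ū`, and this path has
at least two edges. -/
def EVtuple (T : SimpleGraph V) (w wb u ub : V) : Prop :=
  T.Adj w wb ∧ ∃ p : T.Walk u ub, p.IsPath ∧ s(w, wb) ∈ p.edges ∧ 2 ≤ p.length

/-- The information threshold determined by the tree `T` and the
pairwise "mutual information" weights `I`: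
`(1/2) · min_{(e,u,ū) ∈ EV²} ( I(w, w̄) − I(u, ū) )`. -/
def thresh (T : SimpleGraph V) (I : V → V → ℝ) : ℝ :=
  (1 / 2) * sInf {x : ℝ | ∃ w wb u ub : V, EVtuple T w wb u ub ∧ x = I w wb - I u ub}

/-- Total weight of the graph `G` under the edge weights `I`. -/
def score (I : V → V → ℝ) (G : SimpleGraph V) : ℝ :=
  ∑ i, ∑ j, if G.Adj i j then I i j else 0

/-- `G` is a maximum-weight spanning tree for the weights `I`. -/
def IsMaxSpanTree (I : V → V → ℝ) (G : SimpleGraph V) : Prop :=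
  G.IsTree ∧ ∀ G' : SimpleGraph V, G'.IsTree → score I G' ≤ score I G

/-- Probability of the event `E` under `n` i.i.d. samples from the pmf `P`. -/
def probn (P : (V → A) → ℝ) (n : ℕ) (E : Set (Fin n → V → A)) : ℝ :=
  ∑' ω : E, ∏ k, P (ω.1 k)

/-- Empirical marginal pmf of the coordinate `i` computed from the data set `ω`. -/
def emp1 {n : ℕ} (ω : Fin n → V → A) (i : V) : A → ℝ :=
  fun a => (∑ k, if ω k i = a then (1 : ℝ) else 0) / n

/-- Empirical pairwise joint pmf of the coordinates `(i, j)`. -/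
def emp2 {n : ℕ} (ω : Fin n → V → A) (i j : V) : A × A → ℝ :=
  fun ab => (∑ k, if ω k i = ab.1 ∧ ω k j = ab.2 then (1 : ℝ) else 0) / n

/-- Plug-in estimate of the mutual information between coordinates `i` and `j`. -/
def empMI {n : ℕ} (ω : Fin n → V → A) (i j : V) : ℝ :=
  ent (emp1 ω i) + ent (emp1 ω j) - ent (emp2 ω i j)

/-- The Chow–Liu algorithm recovers the tree `T` exactly on the data set `ω`:
every maximum-weight spanning tree for the plug-in mutual information edge
weights equals `T`. -/
def CLRecovers {n : ℕ} (T : SimpleGraph V) (ω : Fin n → V → A) : Prop :=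
  ∀ G : SimpleGraph V, IsMaxSpanTree (fun i j => empMI ω i j) G → G = T

/-- Assumption 2: connectivity, strictly positive pairwise mutual informations,
and nondegeneracy (the tree structure is unique). -/
def Assumption2 (T : SimpleGraph V) (P : (V → A) → ℝ) : Prop :=
  T.Connected ∧ (∀ i j : V, i ≠ j → 0 < mi P i j) ∧
    ∀ T' : SimpleGraph V, T'.IsTree → IsMarkovTree T' P → T' = T

section Prob
variable [Fintype A] (P : (V → A) → ℝ) {n : ℕ}

lemma probn_eq_sum (E : Set (Fin n → V → A)) :
    probn P n E = ∑ ω : Fin n → V → A, if ω ∈ E then ∏ k, P (ω k) else 0 := by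
  rw [probn, tsum_fintype]
  rw [← Finset.sum_subtype (p := (· ∈ E)) (Finset.univ.filter (· ∈ E))
    (by simp) (fun ω => ∏ k, P (ω k))]
  rw [Finset.sum_filter]

lemma probn_empty : probn P n (∅ : Set (Fin n → V → A)) = 0 := by
  rw [probn_eq_sum]; simp

lemma probn_mono {E F : Set (Fin n → V → A)} (hPP : ∀ x, 0 ≤ P x) (h : E ⊆ F) :
    probn P n E ≤ probn P n F := by
  rw [probn_eq_sum, probn_eq_sum]
  apply Finset.sum_le_sum
  intro ω _
  by_cases hω : ω ∈ E
  · rw [if_pos hω, if_pos (h hω)]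
  · rw [if_neg hω]
    by_cases hω' : ω ∈ F
    · rw [if_pos hω']; exact Finset.prod_nonneg fun k _ => hPP _
    · rw [if_neg hω']

lemma prod_sum_pow (f : (V → A) → ℝ) :
    ∀ n : ℕ, ∑ ω : Fin n → V → A, ∏ k, f (ω k) = (∑ x : V → A, f x) ^ n := by
  intro n
  induction n with
  | zero => simp
  | succ m ih =>
    rw [pow_succ, mul_comm, ← ih]
    calc ∑ ω : Fin (m+1) → V → A, ∏ k, f (ω k)
        = ∑ p : (V → A) × (Fin m → V → A), f p.1 * ∏ k, f (p.2 k) := by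
          apply Fintype.sum_bijective (Fin.consEquiv (fun _ : Fin (m+1) => V → A)).symm
            (Equiv.bijective _)
          intro ω
          rw [Fin.prod_univ_succ]
          rfl
      _ = (∑ x : V → A, f x) * ∑ ω : Fin m → V → A, ∏ k, f (ω k) := by
          rw [Fintype.sum_prod_type]
          simp_rw [← Finset.mul_sum]
          rw [← Finset.sum_mul]

lemma probn_univ (hP : IsProbDist P) : probn P n (Set.univ) = 1 := by
  rw [probn_eq_sum]
  simp only [Set.mem_univ, if_true]
  rw [prod_sum_pow]
  rw [show ∑ x : V → A, P x = 1 from by have h := hP.2; rw [tsum_fintype] at h; exact h, one_pow]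

lemma probn_compl (hP : IsProbDist P) (E : Set (Fin n → V → A)) :
    probn P n Eᶜ = 1 - probn P n E := by
  have h0 := probn_univ P (n := n) hP
  rw [probn_eq_sum] at h0
  simp only [Set.mem_univ, if_true] at h0
  rw [probn_eq_sum, probn_eq_sum, eq_sub_iff_add_eq, ← Finset.sum_add_distrib, ← h0]
  apply Finset.sum_congr rfl
  intro ω _
  by_cases hω : ω ∈ E
  · rw [if_pos hω, if_neg (by simpa using hω)]; ring
  · rw [if_neg hω, if_pos (by simpa using hω)]; ring

lemma probn_union_le (hPP : ∀ x, 0 ≤ P x) (E F : Set (Fin n → V → A)) :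
    probn P n (E ∪ F) ≤ probn P n E + probn P n F := by
  simp only [probn_eq_sum]
  rw [← Finset.sum_add_distrib]
  apply Finset.sum_le_sum
  intro ω _
  have hp : (0:ℝ) ≤ ∏ k, P (ω k) := Finset.prod_nonneg fun k _ => hPP _
  by_cases hE : ω ∈ E <;> by_cases hF : ω ∈ F <;>
    simp [hE, hF, Set.mem_union, hp] <;> positivity

lemma probn_iUnion_le {ι : Type*} [Fintype ι] (hPP : ∀ x, 0 ≤ P x)
    (E : ι → Set (Fin n → V → A)) :
    probn P n (⋃ i, E i) ≤ ∑ i, probn P n (E i) := by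
  classical
  have key : ∀ s : Finset ι, probn P n (⋃ i ∈ s, E i) ≤ ∑ i ∈ s, probn P n (E i) := by
    intro s
    induction s using Finset.induction with
    | empty =>
      rw [show (⋃ i ∈ (∅ : Finset ι), E i) = (∅ : Set _) from by simp, probn_empty]
      simp
    | insert a s' hx ih =>
      rw [Finset.set_biUnion_insert, Finset.sum_insert hx]
      exact le_trans (probn_union_le P hPP _ _) (by linarith)
  calc probn P n (⋃ i, E i) = probn P n (⋃ i ∈ Finset.univ, E i) := by simp
    _ ≤ _ := by simpa using key Finset.univ

end Prob
section Chernoff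
variable [Fintype A] (P : (V → A) → ℝ)

/-- existence of a good exponent -/
lemma exists_chernoff_rho {π ε : ℝ} (hπ0 : 0 ≤ π) (hπ1 : π ≤ 1) (hε : 0 < ε) :
    ∃ t ρ : ℝ, 0 < t ∧ 0 < ρ ∧ ρ < 1 ∧
      (π * Real.exp t + (1 - π)) * Real.exp (-t * (π + ε)) ≤ ρ := by
  set g : ℝ → ℝ := fun t => (π * Real.exp t + (1 - π)) * Real.exp (-t * (π + ε)) with hg
  have hg0 : g 0 = 1 := by simp [hg]
  have hd : HasDerivAt g (-ε) 0 := by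
    have h1 : HasDerivAt (fun t : ℝ => π * Real.exp t + (1 - π)) (π * Real.exp 0) 0 :=
      ((Real.hasDerivAt_exp 0).const_mul π).add_const _
    have h2 : HasDerivAt (fun t : ℝ => Real.exp (-t * (π + ε)))
        (Real.exp (-0 * (π + ε)) * (-(π + ε))) 0 := by
      have hin : HasDerivAt (fun t : ℝ => -t * (π + ε)) (-(π + ε)) 0 := by
        simpa using ((hasDerivAt_id (0:ℝ)).neg.mul_const (π + ε))
      exact hin.exp
    have : HasDerivAt (fun t : ℝ => (π * Real.exp t + (1 - π)) * Real.exp (-t * (π + ε)))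
        (π * Real.exp 0 * Real.exp (-0 * (π + ε))
          + (π * Real.exp 0 + (1 - π)) * (Real.exp (-0 * (π + ε)) * -(π + ε))) 0 := h1.mul h2
    convert this using 1
    simp only [Real.exp_zero, mul_one, mul_zero, neg_zero, zero_mul, one_mul]
    ring
  have hslope : Filter.Tendsto (slope g 0) (nhdsWithin 0 (Set.Ioi 0))
      (nhds (-ε)) := by
    have := hd.hasDerivWithinAt (s := Set.Ioi (0:ℝ))
    have h := hasDerivWithinAt_iff_tendsto_slope.mp this
    have hsub : nhdsWithin (0:ℝ) (Set.Ioi 0 \ {0}) = nhdsWithin 0 (Set.Ioi 0) := by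
      congr 1
      rw [Set.diff_eq, Set.inter_eq_self_of_subset_left]
      intro x hx
      simp only [Set.mem_compl_iff, Set.mem_singleton_iff]
      exact ne_of_gt hx
    rw [hsub] at h
    exact h
  have hev : ∀ᶠ t in nhdsWithin (0:ℝ) (Set.Ioi 0), slope g 0 t < 0 := by
    apply hslope.eventually_lt_const
    linarith
  have hmem : ∀ᶠ t in nhdsWithin (0:ℝ) (Set.Ioi 0), t ∈ Set.Ioi (0:ℝ) :=
    self_mem_nhdsWithin
  obtain ⟨t, ht1, ht2⟩ := (hev.and hmem).exists
  have hexp1 : (1:ℝ) ≤ Real.exp t := by nlinarith [Real.add_one_le_exp t, Set.mem_Ioi.mp ht2]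
  rw [slope_def_field] at ht1
  refine ⟨t, g t, ht2, ?_, ?_, le_refl _⟩
  · apply mul_pos
    · nlinarith
    · exact Real.exp_pos _
  · have ht0 : (0:ℝ) < t := ht2
    rw [hg0] at ht1
    have := div_neg_iff.mp ht1
    rcases this with ⟨h1, h2⟩ | ⟨h1, h2⟩
    · linarith
    · linarith

/-- Chernoff bound for the upper tail of a Bernoulli count. -/
lemma chernoff_upper (hP : IsProbDist P) (Q : (V → A) → Prop) [DecidablePred Q] {π ε t ρ : ℝ}
    (hπ : π = ∑ x : V → A, if Q x then P x else 0)
    (ht : 0 < t) (hρ : (π * Real.exp t + (1 - π)) * Real.exp (-t * (π + ε)) ≤ ρ)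
    (hρ0 : 0 ≤ ρ) (n : ℕ) :
    probn P n {ω | (π + ε) * n ≤ ∑ k, if Q (ω k) then (1:ℝ) else 0} ≤ ρ ^ n := by
  rw [probn_eq_sum]
  have key : ∀ ω : Fin n → V → A,
      (if ω ∈ {ω : Fin n → V → A | (π + ε) * n ≤ ∑ k, if Q (ω k) then (1:ℝ) else 0}
        then ∏ k, P (ω k) else 0)
      ≤ Real.exp (-t * (π + ε)) ^ n * ∏ k, (P (ω k) * Real.exp (t * if Q (ω k) then (1:ℝ) else 0)) := by
    intro ω
    simp only [Set.mem_setOf_eq]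
    have hnn : (0:ℝ) ≤ ∏ k, P (ω k) := Finset.prod_nonneg fun k _ => hP.1 _
    by_cases hω : (π + ε) * n ≤ ∑ k, if Q (ω k) then (1:ℝ) else 0
    · rw [if_pos hω]
      have hexp : ∏ k, (P (ω k) * Real.exp (t * if Q (ω k) then (1:ℝ) else 0))
          = (∏ k, P (ω k)) * Real.exp (t * ∑ k, if Q (ω k) then (1:ℝ) else 0) := by
        rw [Finset.prod_mul_distrib, ← Real.exp_sum, Finset.mul_sum]
      rw [hexp, ← mul_assoc]
      have h1 : (1:ℝ) ≤ Real.exp (-t * (π + ε)) ^ n * Real.exp (t * ∑ k, if Q (ω k) then (1:ℝ) else 0) := by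
        rw [← Real.exp_nat_mul, ← Real.exp_add]
        have hstep : t * ((π + ε) * n) ≤ t * ∑ k, if Q (ω k) then (1:ℝ) else 0 :=
          mul_le_mul_of_nonneg_left hω (le_of_lt ht)
        calc (1:ℝ) = Real.exp 0 := (Real.exp_zero).symm
          _ ≤ _ := Real.exp_le_exp.mpr (by nlinarith)
      calc ∏ k, P (ω k) = (∏ k, P (ω k)) * 1 := by ring
        _ ≤ (∏ k, P (ω k)) * (Real.exp (-t * (π + ε)) ^ n * Real.exp (t * ∑ k, if Q (ω k) then (1:ℝ) else 0)) :=
            mul_le_mul_of_nonneg_left h1 hnn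
        _ = Real.exp (-t * (π + ε)) ^ n * (∏ k, P (ω k)) * Real.exp (t * ∑ k, if Q (ω k) then (1:ℝ) else 0) := by ring
    · rw [if_neg hω]
      apply mul_nonneg
      · positivity
      · apply Finset.prod_nonneg
        intro k _
        exact mul_nonneg (hP.1 _) (le_of_lt (Real.exp_pos _))
  calc ∑ ω : Fin n → V → A, (if ω ∈ {ω : Fin n → V → A | (π + ε) * n ≤ ∑ k, if Q (ω k) then (1:ℝ) else 0} then ∏ k, P (ω k) else 0)
      ≤ ∑ ω : Fin n → V → A, Real.exp (-t * (π + ε)) ^ n * ∏ k, (P (ω k) * Real.exp (t * if Q (ω k) then (1:ℝ) else 0)) :=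
        Finset.sum_le_sum fun ω _ => key ω
    _ = Real.exp (-t * (π + ε)) ^ n * ∑ ω : Fin n → V → A, ∏ k, (P (ω k) * Real.exp (t * if Q (ω k) then (1:ℝ) else 0)) := by
        rw [Finset.mul_sum]
    _ = Real.exp (-t * (π + ε)) ^ n * (∑ x : V → A, P x * Real.exp (t * if Q x then (1:ℝ) else 0)) ^ n := by
        rw [prod_sum_pow (f := fun x => P x * Real.exp (t * if Q x then (1:ℝ) else 0))]
    _ = ((π * Real.exp t + (1 - π)) * Real.exp (-t * (π + ε))) ^ n := by
        rw [mul_pow]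
        rw [show ∑ x : V → A, P x * Real.exp (t * if Q x then (1:ℝ) else 0)
            = π * Real.exp t + (1 - π) from ?_]
        · ring
        · have htot : ∑ x : V → A, P x = 1 := by have h := hP.2; rw [tsum_fintype] at h; exact h
          rw [hπ]
          rw [show ∑ x : V → A, P x * Real.exp (t * if Q x then (1:ℝ) else 0)
              = ∑ x : V → A, ((if Q x then P x else 0) * (Real.exp t - 1) + P x) from ?_]
          · rw [Finset.sum_add_distrib, ← Finset.sum_mul, htot]
            ring
          · apply Finset.sum_congr rfl
            intro x _
            by_cases hx : Q x <;> simp [hx] <;> ring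
    _ ≤ ρ ^ n := by
        apply pow_le_pow_left₀ _ hρ
        apply mul_nonneg
        · have hπ0 : 0 ≤ π := by
            rw [hπ]; exact Finset.sum_nonneg fun x _ => by by_cases hx : Q x <;> simp [hx, hP.1 x]
          have hπ1 : π ≤ 1 := by
            rw [hπ]
            have htot : ∑ x : V → A, P x = 1 := by have h := hP.2; rw [tsum_fintype] at h; exact h
            rw [← htot]
            apply Finset.sum_le_sum
            intro x _
            by_cases hx : Q x <;> simp [hx, hP.1 x]
          have hexp1 : (1:ℝ) ≤ Real.exp t := by nlinarith [Real.add_one_le_exp t]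
          nlinarith
        · exact le_of_lt (Real.exp_pos _)

end Chernoff


section Cont
variable [Fintype A]

lemma ent_fin {α : Type*} [Fintype α] (f : α → ℝ) :
    ent f = -∑ a, f a * Real.logb 2 (f a) := by
  rw [ent, tsum_fintype]

/-- The mutual information as a function of the joint pairwise distribution. -/
def mifun (A : Type*) [Fintype A] (q : A × A → ℝ) : ℝ :=
  (-∑ a : A, (∑ b : A, q (a, b)) * Real.logb 2 (∑ b : A, q (a, b)))
  + (-∑ b : A, (∑ a : A, q (a, b)) * Real.logb 2 (∑ a : A, q (a, b)))
  - (-∑ p : A × A, q p * Real.logb 2 (q p))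

lemma continuous_mifun : Continuous (mifun A) := by
  have hφ : Continuous (fun x : ℝ => x * Real.logb 2 x) := by
    have h : (fun x : ℝ => x * Real.logb 2 x)
        = fun x : ℝ => (x * Real.log x) * (Real.log 2)⁻¹ := by
      funext x; rw [Real.logb]; ring
    rw [h]
    exact Real.continuous_mul_log.mul continuous_const
  apply Continuous.sub
  · apply Continuous.add
    · apply Continuous.neg
      apply continuous_finset_sum
      intro a _
      exact hφ.comp (continuous_finset_sum _ fun b _ => continuous_apply (a, b))
    · apply Continuous.neg
      apply continuous_finset_sum
      intro b _
      exact hφ.comp (continuous_finset_sum _ fun a _ => continuous_apply (a, b))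
  · apply Continuous.neg
    apply continuous_finset_sum
    intro p _
    exact hφ.comp (continuous_apply p)

lemma marg1_fin (P : (V → A) → ℝ) (i : V) (a : A) :
    marg1 P i a = ∑ x : V → A, if x i = a then P x else 0 := by
  rw [marg1, tsum_fintype]

lemma marg2_fin (P : (V → A) → ℝ) (i j : V) (ab : A × A) :
    marg2 P i j ab = ∑ x : V → A, if x i = ab.1 ∧ x j = ab.2 then P x else 0 := by
  rw [marg2, tsum_fintype]

lemma marg1_row (P : (V → A) → ℝ) (i j : V) (a : A) :
    marg1 P i a = ∑ b, marg2 P i j (a, b) := by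
  simp only [marg1_fin, marg2_fin]
  rw [Finset.sum_comm]
  apply Finset.sum_congr rfl
  intro x _
  by_cases hx : x i = a
  · simp [hx]
  · simp [hx]

lemma marg1_col (P : (V → A) → ℝ) (i j : V) (b : A) :
    marg1 P j b = ∑ a, marg2 P i j (a, b) := by
  simp only [marg1_fin, marg2_fin]
  rw [Finset.sum_comm]
  apply Finset.sum_congr rfl
  intro x _
  by_cases hx : x j = b
  · simp [hx]
  · simp [hx]

lemma mi_eq_mifun (P : (V → A) → ℝ) (i j : V) :
    mi P i j = mifun A (marg2 P i j) := by
  rw [mi, mifun, ent_fin, ent_fin, ent_fin]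
  have h1 : ∀ a, marg1 P i a = ∑ b, marg2 P i j (a, b) := marg1_row P i j
  have h2 : ∀ b, marg1 P j b = ∑ a, marg2 P i j (a, b) := marg1_col P i j
  simp only [h1, h2]

lemma emp1_row {n : ℕ} (ω : Fin n → V → A) (i j : V) (a : A) :
    emp1 ω i a = ∑ b, emp2 ω i j (a, b) := by
  simp only [emp1, emp2]
  rw [← Finset.sum_div]
  congr 1
  rw [Finset.sum_comm]
  apply Finset.sum_congr rfl
  intro k _
  by_cases hx : ω k i = a
  · simp [hx]
  · simp [hx]

lemma emp1_col {n : ℕ} (ω : Fin n → V → A) (i j : V) (b : A) :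
    emp1 ω j b = ∑ a, emp2 ω i j (a, b) := by
  simp only [emp1, emp2]
  rw [← Finset.sum_div]
  congr 1
  rw [Finset.sum_comm]
  apply Finset.sum_congr rfl
  intro k _
  by_cases hx : ω k j = b
  · simp [hx]
  · simp [hx]

lemma empMI_eq_mifun {n : ℕ} (ω : Fin n → V → A) (i j : V) :
    empMI ω i j = mifun A (emp2 ω i j) := by
  rw [empMI, mifun, ent_fin, ent_fin, ent_fin]
  have h1 : ∀ a, emp1 ω i a = ∑ b, emp2 ω i j (a, b) := emp1_row ω i j
  have h2 : ∀ b, emp1 ω j b = ∑ a, emp2 ω i j (a, b) := emp1_col ω i j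
  simp only [h1, h2]

lemma emp2_symm {n : ℕ} (ω : Fin n → V → A) (i j : V) (a b : A) :
    emp2 ω i j (a, b) = emp2 ω j i (b, a) := by
  simp only [emp2]
  congr 1
  exact Finset.sum_congr rfl fun k _ => if_congr and_comm rfl rfl

lemma empMI_symm {n : ℕ} (ω : Fin n → V → A) (i j : V) :
    empMI ω i j = empMI ω j i := by
  rw [empMI, empMI]
  have h : ent (emp2 ω i j) = ent (emp2 ω j i) := by
    rw [ent_fin, ent_fin]
    congr 1
    apply Fintype.sum_equiv (Equiv.prodComm A A)
    intro p
    rw [show (Equiv.prodComm A A) p = (p.2, p.1) from rfl]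
    rw [show p = (p.1, p.2) from rfl, emp2_symm]
  rw [h]
  ring

/-- Key continuity estimate. -/
lemma exists_dist_bound (P : (V → A) → ℝ) (θ : ℝ) (hθ : 0 < θ) (i j : V) :
    ∃ d > 0, ∀ {n : ℕ} (ω : Fin n → V → A),
      (∀ ab : A × A, |emp2 ω i j ab - marg2 P i j ab| < d) →
      |empMI ω i j - mi P i j| < θ := by
  obtain ⟨d, hd, hball⟩ := Metric.continuous_iff.mp continuous_mifun (marg2 P i j) θ hθ
  refine ⟨d, hd, ?_⟩
  intro n ω hω
  have hdist : dist (emp2 ω i j) (marg2 P i j) < d := by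
    rw [dist_pi_lt_iff hd]
    intro ab
    rw [Real.dist_eq]
    exact hω ab
  have := hball _ hdist
  rw [Real.dist_eq] at this
  rw [empMI_eq_mifun, mi_eq_mifun]
  exact this

end Cont

lemma mst_unique (T : SimpleGraph V) (hT : T.IsTree) (W : V → V → ℝ)
    (hsym : ∀ i j, W i j = W j i)
    (hW : ∀ w wb u ub, EVtuple T w wb u ub → W u ub < W w wb)
    (G : SimpleGraph V) (hG : IsMaxSpanTree W G) : G = T := by
  have hsub : G.edgeSet ⊆ T.edgeSet := by
    by_contra hns
    obtain ⟨e0, heG, heT⟩ := Set.not_subset.mp hns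
    induction e0 using Sym2.ind with | _ u ub => ?_
    have hGadj : G.Adj u ub := G.mem_edgeSet.mp heG
    have hTn : ¬ T.Adj u ub := fun h => heT (T.mem_edgeSet.mpr h)
    have hune : u ≠ ub := hGadj.ne
    set e : Sym2 V := s(u, ub) with he
    set Gd : SimpleGraph V := G \ SimpleGraph.fromEdgeSet {e} with hGd
    have hGdadj : ∀ x y : V, Gd.Adj x y ↔ G.Adj x y ∧ s(x, y) ≠ e := by
      intro x y
      rw [hGd, SimpleGraph.sdiff_adj, SimpleGraph.fromEdgeSet_adj]
      constructor
      · rintro ⟨h1, h2⟩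
        refine ⟨h1, fun hh => h2 ⟨by simp [hh], h1.ne⟩⟩
      · rintro ⟨h1, h2⟩
        exact ⟨h1, fun hh => h2 (by simpa using hh.1)⟩
    have hbridge : ¬ Gd.Reachable u ub := by
      have hbr : G.IsBridge e := SimpleGraph.isAcyclic_iff_forall_adj_isBridge.mp
        hG.1.IsAcyclic hGadj
      exact SimpleGraph.isBridge_iff.mp hbr
    -- classification of vertices into the two sides
    have hclass : ∀ v, Gd.Reachable u v ∨ Gd.Reachable ub v := by
      have H : ∀ (x v : V), G.Walk x v → (Gd.Reachable u x ∨ Gd.Reachable ub x) →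
          (Gd.Reachable u v ∨ Gd.Reachable ub v) := by
        intro x v p
        induction p with
        | nil => exact id
        | @cons a b c hadj q ih =>
          intro hx
          apply ih
          by_cases hab : s(a, b) = e
          · rcases Sym2.eq_iff.mp hab with ⟨rfl, rfl⟩ | ⟨rfl, rfl⟩
            · exact Or.inr (SimpleGraph.Reachable.refl _)
            · exact Or.inl (SimpleGraph.Reachable.refl _)
          · have hGda : Gd.Adj a b := (hGdadj a b).mpr ⟨hadj, hab⟩
            rcases hx with hx | hx
            · exact Or.inl (hx.trans hGda.reachable)
            · exact Or.inr (hx.trans hGda.reachable)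
      intro v
      obtain ⟨p⟩ := hG.1.isConnected.preconnected u v
      exact H u v p (Or.inl (SimpleGraph.Reachable.refl _))
    -- path in T from u to ub
    obtain ⟨w0⟩ := hT.isConnected.preconnected u ub
    set pp := w0.toPath with hpp
    have hlen2 : ∀ (pw : T.Walk u ub), 2 ≤ pw.length := by
      intro pw
      cases pw with
      | nil => exact absurd rfl hune
      | @cons _ b _ h q =>
        cases q with
        | nil => exact absurd h hTn
        | cons h2 q2 => simp only [SimpleGraph.Walk.length_cons]; omega
    have hlen : 2 ≤ pp.1.length := hlen2 pp.1
    -- find the crossing edge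
    have hcross : ∀ (x y : V) (q : T.Walk x y), Gd.Reachable u x → ¬ Gd.Reachable u y →
        ∃ w wb, T.Adj w wb ∧ s(w, wb) ∈ q.edges ∧ Gd.Reachable u w ∧ ¬ Gd.Reachable u wb := by
      intro x y q
      induction q with
      | nil => intro h1 h2; exact absurd h1 h2
      | @cons a b c hadj q ih =>
        intro h1 h2
        by_cases hb : Gd.Reachable u b
        · obtain ⟨w, wb, hwadj, hwe, hw1, hw2⟩ := ih hb h2
          exact ⟨w, wb, hwadj, by simp [SimpleGraph.Walk.edges_cons, hwe], hw1, hw2⟩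
        · exact ⟨a, b, hadj, by simp [SimpleGraph.Walk.edges_cons], h1, hb⟩
    obtain ⟨w, wb, hwadj, hwe, hw1, hw2⟩ :=
      hcross u ub pp.1 (SimpleGraph.Reachable.refl _) hbridge
    have hEV : EVtuple T w wb u ub := ⟨hwadj, pp.1, pp.2, hwe, hlen⟩
    have hWlt := hW w wb u ub hEV
    have hwwb : w ≠ wb := hwadj.ne
    set f : Sym2 V := s(w, wb) with hf
    have hfne : f ≠ e := by
      intro hfe
      rcases Sym2.eq_iff.mp hfe with ⟨rfl, rfl⟩ | ⟨rfl, rfl⟩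
      · exact hTn hwadj
      · exact hTn hwadj.symm
    have hGnwwb : ¬ G.Adj w wb := by
      intro hA
      exact hw2 (hw1.trans ((hGdadj w wb).mpr ⟨hA, hfne⟩).reachable)
    -- classification of wb
    have hwb : Gd.Reachable ub wb := by
      rcases hclass wb with h | h
      · exact absurd h hw2
      · exact h
    -- the swapped graph
    set G' : SimpleGraph V := SimpleGraph.fromEdgeSet (insert f (G.edgeSet \ {e})) with hG'
    have hG'adj : ∀ x y : V, G'.Adj x y ↔
        (s(x, y) = f ∨ (s(x, y) ∈ G.edgeSet ∧ s(x, y) ≠ e)) ∧ x ≠ y := by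
      intro x y
      rw [hG', SimpleGraph.fromEdgeSet_adj]
      simp [Set.mem_insert_iff, Set.mem_diff]
    have hGdleG' : Gd ≤ G' := by
      intro x y hxy
      rw [hGdadj] at hxy
      exact (hG'adj x y).mpr ⟨Or.inr ⟨G.mem_edgeSet.mpr hxy.1, hxy.2⟩, hxy.1.ne⟩
    have hG'wwb : G'.Adj w wb := (hG'adj w wb).mpr ⟨Or.inl rfl, hwwb⟩
    have hG'conn : G'.Connected := by
      rw [SimpleGraph.connected_iff]
      refine ⟨?_, ⟨u⟩⟩
      have hto : ∀ v, G'.Reachable v w := by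
        intro v
        rcases hclass v with hv | hv
        · exact ((hv.symm.trans hw1).mono hGdleG')
        · exact (((hv.symm.trans hwb).mono hGdleG').trans hG'wwb.symm.reachable)
      intro a b
      exact (hto a).trans (hto b).symm
    have hG'acyc : G'.IsAcyclic := by
      intro v c hc
      by_cases hfc : f ∈ c.edges
      · have hkey := SimpleGraph.adj_and_reachable_delete_edges_iff_exists_cycle.mpr
          ⟨v, c, hc, (by rwa [← hf])⟩
        have hle2 : (G' \ SimpleGraph.fromEdgeSet {f}) ≤ Gd := by
          intro x y hxy
          rw [SimpleGraph.sdiff_adj] at hxy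
          obtain ⟨hxy1, hxy2⟩ := hxy
          rw [SimpleGraph.fromEdgeSet_adj] at hxy2
          obtain ⟨h3, hne⟩ := (hG'adj x y).mp hxy1
          rcases h3 with h3 | h3
          · exact absurd ⟨by simp [h3], hne⟩ hxy2
          · exact (hGdadj x y).mpr ⟨G.mem_edgeSet.mp h3.1, h3.2⟩
        have := (hkey.2.mono hle2)
        exact hw2 (hw1.trans this)
      · have hsubedges : ∀ e' ∈ c.edges, e' ∈ G.edgeSet := by
          intro e' he'
          have hmem := c.edges_subset_edgeSet he'
          rw [hG', SimpleGraph.edgeSet_fromEdgeSet] at hmem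
          obtain ⟨hmem1, _⟩ := hmem
          rcases Set.mem_insert_iff.mp hmem1 with h | h
          · exact absurd (h ▸ he') hfc
          · exact h.1
        exact hG.1.IsAcyclic (c.transfer G hsubedges) (hc.transfer hsubedges)
    have hG'tree : G'.IsTree := ⟨hG'conn, hG'acyc⟩
    have hscore := hG.2 G' hG'tree
    -- score computation
    have hdiff : score W G' - score W G = 2 * (W w wb - W u ub) := by
      have h1 : score W G' - score W G
          = ∑ p : V × V, ((if G'.Adj p.1 p.2 then W p.1 p.2 else 0)
              - (if G.Adj p.1 p.2 then W p.1 p.2 else 0)) := by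
        rw [Finset.sum_sub_distrib]
        rw [score, score, Fintype.sum_prod_type, Fintype.sum_prod_type]
        convert rfl
      set H : V × V → ℝ := fun p => (if G'.Adj p.1 p.2 then W p.1 p.2 else 0)
          - (if G.Adj p.1 p.2 then W p.1 p.2 else 0) with hH
      set S : Finset (V × V) := {(u, ub), (ub, u), (w, wb), (wb, w)} with hS
      have hvanish : ∀ p ∈ Finset.univ, p ∉ S → H p = 0 := by
        rintro ⟨x, y⟩ _ hp
        simp only [hS, Finset.mem_insert, Finset.mem_singleton, Prod.mk.injEq, not_or] at hp
        obtain ⟨hp1, hp2, hp3, hp4⟩ := hp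
        have hxe : s(x, y) ≠ e := by
          intro h
          rcases Sym2.eq_iff.mp h with ⟨rfl, rfl⟩ | ⟨rfl, rfl⟩
          · exact hp1 ⟨rfl, rfl⟩
          · exact hp2 ⟨rfl, rfl⟩
        have hxf : s(x, y) ≠ f := by
          intro h
          rcases Sym2.eq_iff.mp h with ⟨rfl, rfl⟩ | ⟨rfl, rfl⟩
          · exact hp3 ⟨rfl, rfl⟩
          · exact hp4 ⟨rfl, rfl⟩
        have hiff : G'.Adj x y ↔ G.Adj x y := by
          rw [hG'adj]
          constructor
          · rintro ⟨h3 | h3, hne⟩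
            · exact absurd h3 hxf
            · exact G.mem_edgeSet.mp h3.1
          · intro h3
            exact ⟨Or.inr ⟨G.mem_edgeSet.mpr h3, hxe⟩, h3.ne⟩
        rw [hH]
        by_cases hxy : G.Adj x y
        · simp only [if_pos hxy, if_pos (hiff.mpr hxy), sub_self]
        · simp only [if_neg hxy, if_neg (fun hh => hxy (hiff.mp hh)), sub_self]
      have h2 : ∑ p : V × V, H p = ∑ p ∈ S, H p :=
        (Finset.sum_subset (Finset.subset_univ S) hvanish).symm
      -- distinctness
      have d1 : ((u, ub) : V × V) ≠ (ub, u) := by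
        intro h
        simp only [Prod.mk.injEq] at h
        exact hune h.1
      have efne : e ≠ f := fun h => hfne h.symm
      have d2 : ((u, ub) : V × V) ≠ (w, wb) := by
        intro h
        simp only [Prod.mk.injEq] at h
        apply efne
        rw [he, hf, h.1, h.2]
      have d3 : ((u, ub) : V × V) ≠ (wb, w) := by
        intro h
        simp only [Prod.mk.injEq] at h
        apply efne
        rw [he, hf, h.1, h.2]
        exact Sym2.eq_swap
      have d4 : ((ub, u) : V × V) ≠ (w, wb) := by
        intro h
        simp only [Prod.mk.injEq] at h
        apply efne
        rw [he, hf, h.2, h.1]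
        exact Sym2.eq_swap
      have d5 : ((ub, u) : V × V) ≠ (wb, w) := by
        intro h
        simp only [Prod.mk.injEq] at h
        apply efne
        rw [he, hf, h.2, h.1]
      have d6 : ((w, wb) : V × V) ≠ (wb, w) := by
        intro h
        simp only [Prod.mk.injEq] at h
        exact hwwb h.1
      -- values of H
      have hv1 : H (u, ub) = - W u ub := by
        have hnadj : ¬ G'.Adj u ub := by
          rw [hG'adj]
          rintro ⟨h3 | h3, _⟩
          · exact hfne (hf ▸ (he ▸ h3.symm))
          · exact h3.2 rfl
        simp [hH, hnadj, hGadj]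
      have hv2 : H (ub, u) = - W ub u := by
        have hnadj : ¬ G'.Adj ub u := by
          intro hh
          have : G'.Adj u ub := hh.symm
          rw [hG'adj] at this
          rcases this.1 with h3 | h3
          · exact hfne (hf ▸ (he ▸ h3.symm))
          · exact h3.2 rfl
        simp [hH, hnadj, hGadj.symm]
      have hv3 : H (w, wb) = W w wb := by
        simp [hH, hG'wwb, hGnwwb]
      have hv4 : H (wb, w) = W wb w := by
        have : ¬ G.Adj wb w := fun hh => hGnwwb hh.symm
        simp [hH, hG'wwb.symm, this]
      rw [h1, h2, hS]
      rw [Finset.sum_insert (by simp [d1, d2, d3]),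
          Finset.sum_insert (by simp [d4, d5]),
          Finset.sum_insert (by simp [d6]),
          Finset.sum_singleton]
      rw [hv1, hv2, hv3, hv4, hsym ub u, hsym wb w]
      ring
    linarith
  -- conclude G = T
  have hcard1 := hT.card_edgeFinset
  have hcard2 := hG.1.card_edgeFinset
  have hfin : G.edgeFinset ⊆ T.edgeFinset :=
    SimpleGraph.edgeFinset_subset_edgeFinset.mpr
      (SimpleGraph.edgeSet_subset_edgeSet.mp hsub)
  have : G.edgeFinset = T.edgeFinset :=
    Finset.eq_of_subset_of_card_le hfin (by omega)
  exact SimpleGraph.edgeFinset_inj.mp this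



set_option maxHeartbeats 2000000

/-- **Finite-alphabet sample complexity of the Chow–Liu algorithm.**
If `X` has finite support and a tree-structured distribution in `P_T(c₁, c₂)`
(for a finite alphabet, Assumption 1 just says all singleton and pairwise
marginals are bounded between positive constants, i.e. have full support), then
there is a constant `C > 0`, independent of `δ`, such that whenever
`n/(log₂ n)² ≥ 72 log(p/δ)/(I^o − C/√n)²` and `I^o > C/√n`, the Chow–Liu
algorithm run on `n` i.i.d. samples returns `T` with probability at least `1 − δ`. -/
theorem chow_liu_sample_complexity_finite
    {V : Type*} [Fintype V] [DecidableEq V] {A : Type*} [Fintype A]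
    (T : SimpleGraph V) (hT : T.IsTree) (hcard : 3 ≤ Fintype.card V)
    (P : (V → A) → ℝ) (hP : IsProbDist P) (hMarkov : IsMarkovTree T P)
    (hA1 : (∀ (i : V) (a : A), 0 < marg1 P i a) ∧
      ∀ (i j : V), i ≠ j → ∀ ab : A × A, 0 < marg2 P i j ab)
    (hA2 : Assumption2 T P) :
    ∃ C : ℝ, 0 < C ∧
      ∀ δ ∈ Set.Ioo (0 : ℝ) 1, ∀ n : ℕ,
        72 * Real.log ((Fintype.card V : ℝ) / δ)
            / (thresh T (mi P) - C / Real.sqrt n) ^ 2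
          ≤ (n : ℝ) / (Real.logb 2 (n : ℝ)) ^ 2 →
        C / Real.sqrt n < thresh T (mi P) →
        1 - δ ≤ probn P n {ω | CLRecovers T ω} := by
  classical
  by_cases hθpos : 0 < thresh T (mi P)
  case neg =>
    refine ⟨1, one_pos, ?_⟩
    intro δ hδ n h1 h2
    exfalso
    have h0 : (0:ℝ) ≤ 1 / Real.sqrt n := by positivity
    exact hθpos (lt_of_le_of_lt h0 h2)
  case pos =>
  set θ := thresh T (mi P) with hθdef
  have hVne : Nonempty V := Fintype.card_pos_iff.mp (by omega)
  have hAne : Nonempty A := by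
    by_contra hA
    rw [not_nonempty_iff] at hA
    have hemp : IsEmpty (V → A) := ⟨fun f => hA.false (f (Classical.arbitrary V))⟩
    have h := hP.2
    rw [tsum_empty] at h
    norm_num at h
  -- per-pair continuity bound
  have hcont : ∀ p : V × V, ∃ d, 0 < d ∧ ∀ (n : ℕ) (ω : Fin n → V → A),
      (∀ ab : A × A, |emp2 ω p.1 p.2 ab - marg2 P p.1 p.2 ab| < d) →
      |empMI ω p.1 p.2 - mi P p.1 p.2| < θ := by
    intro p
    obtain ⟨d, hd, hspec⟩ := exists_dist_bound P θ hθpos p.1 p.2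
    exact ⟨d, hd, fun n ω h => hspec ω h⟩
  choose df hdf0 hdfspec using hcont
  set ε : ℝ := Finset.univ.inf' Finset.univ_nonempty df with hεdef
  have hε0 : 0 < ε := by
    rw [hεdef, Finset.lt_inf'_iff]
    intro p _
    exact hdf0 p
  have hεle : ∀ p : V × V, ε ≤ df p := fun p => Finset.inf'_le _ (Finset.mem_univ p)
  -- index type for the deviation events
  set π : (V × V) × (A × A) → ℝ := fun x => marg2 P x.1.1 x.1.2 x.2 with hπdef
  set Q : (V × V) × (A × A) → (V → A) → Prop :=
    fun x y => y x.1.1 = x.2.1 ∧ y x.1.2 = x.2.2 with hQdef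
  have htot : ∑ y : V → A, P y = 1 := by have h := hP.2; rw [tsum_fintype] at h; exact h
  have hπsum : ∀ x, π x = ∑ y : V → A, if Q x y then P y else 0 := by
    intro x
    calc π x = marg2 P x.1.1 x.1.2 x.2 := rfl
      _ = ∑ y : V → A, if y x.1.1 = x.2.1 ∧ y x.1.2 = x.2.2 then P y else 0 :=
          marg2_fin P x.1.1 x.1.2 x.2
      _ = ∑ y : V → A, if Q x y then P y else 0 := rfl
  have hπ0 : ∀ x, 0 ≤ π x := by
    intro x
    rw [hπsum]
    apply Finset.sum_nonneg
    intro y _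
    by_cases h : Q x y
    · rw [if_pos h]; exact hP.1 y
    · rw [if_neg h]
  have hπ1 : ∀ x, π x ≤ 1 := by
    intro x
    rw [hπsum, ← htot]
    apply Finset.sum_le_sum
    intro y _
    by_cases h : Q x y
    · rw [if_pos h]
    · rw [if_neg h]; exact hP.1 y
  have hπ'sum : ∀ x, 1 - π x = ∑ y : V → A, if ¬ Q x y then P y else 0 := by
    intro x
    have hsplit : (∑ y : V → A, if Q x y then P y else 0)
        + (∑ y : V → A, if ¬ Q x y then P y else 0) = 1 := by
      rw [← Finset.sum_add_distrib, ← htot]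
      apply Finset.sum_congr rfl
      intro y _
      by_cases h : Q x y
      · rw [if_pos h, if_neg (not_not_intro h)]; ring
      · rw [if_neg h, if_pos h]; ring
    rw [← hπsum x] at hsplit
    linarith
  -- Chernoff rates
  have hrates : ∀ x : (V × V) × (A × A), ∃ r : ℝ, 0 < r ∧ r < 1 ∧ ∀ n : ℕ,
      probn P n {ω : Fin n → V → A |
        (π x + ε) * n ≤ ∑ k, if Q x (ω k) then (1:ℝ) else 0} ≤ r ^ n ∧
      probn P n {ω : Fin n → V → A |
        ((1 - π x) + ε) * n ≤ ∑ k, if ¬ Q x (ω k) then (1:ℝ) else 0} ≤ r ^ n := by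
    intro x
    obtain ⟨t1, r1, ht1, hr10, hr11, hb1⟩ := exists_chernoff_rho (hπ0 x) (hπ1 x) hε0
    obtain ⟨t2, r2, ht2, hr20, hr21, hb2⟩ :=
      exists_chernoff_rho (π := 1 - π x) (by linarith [hπ1 x]) (by linarith [hπ0 x]) hε0
    refine ⟨max r1 r2, lt_max_of_lt_left hr10, max_lt hr11 hr21, ?_⟩
    intro n
    constructor
    · exact chernoff_upper P hP (Q x) (hπsum x) ht1
        (le_trans hb1 (le_max_left _ _)) (le_trans hr10.le (le_max_left _ _)) n
    · exact chernoff_upper P hP (fun y => ¬ Q x y) (hπ'sum x) ht2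
        (le_trans hb2 (le_max_right _ _)) (le_trans hr20.le (le_max_right _ _)) n
  choose r hr0 hr1 hrbound using hrates
  set ρ : ℝ := Finset.univ.sup' Finset.univ_nonempty r with hρdef
  have hρ0 : 0 < ρ :=
    lt_of_lt_of_le (hr0 (Classical.arbitrary _)) (Finset.le_sup' r (Finset.mem_univ _))
  have hρ1 : ρ < 1 := by
    rw [hρdef, Finset.sup'_lt_iff]
    intro x _
    exact hr1 x
  have hρx : ∀ x, r x ≤ ρ := fun x => Finset.le_sup' r (Finset.mem_univ x)
  set M : ℝ := 2 * (Fintype.card ((V × V) × (A × A)) : ℝ) with hMdef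
  have hM0 : 0 < M := by
    rw [hMdef]
    have : 0 < Fintype.card ((V × V) × (A × A)) := Fintype.card_pos
    positivity
  -- bad event bound
  have hBadBound : ∀ n : ℕ, probn P n (⋃ x : (V × V) × (A × A),
      ({ω : Fin n → V → A | (π x + ε) * n ≤ ∑ k, if Q x (ω k) then (1:ℝ) else 0}
       ∪ {ω : Fin n → V → A |
          ((1 - π x) + ε) * n ≤ ∑ k, if ¬ Q x (ω k) then (1:ℝ) else 0})) ≤ M * ρ ^ n := by
    intro n
    refine le_trans (probn_iUnion_le P hP.1 _) ?_
    have hterm : ∀ x ∈ (Finset.univ : Finset ((V × V) × (A × A))), probn P n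
        ({ω : Fin n → V → A | (π x + ε) * n ≤ ∑ k, if Q x (ω k) then (1:ℝ) else 0}
         ∪ {ω : Fin n → V → A |
            ((1 - π x) + ε) * n ≤ ∑ k, if ¬ Q x (ω k) then (1:ℝ) else 0}) ≤ 2 * ρ ^ n := by
      intro x _
      have h1 := (hrbound x n).1
      have h2 := (hrbound x n).2
      have h3 : r x ^ n ≤ ρ ^ n := pow_le_pow_left₀ (hr0 x).le (hρx x) n
      have h4 := probn_union_le P hP.1
        {ω : Fin n → V → A | (π x + ε) * n ≤ ∑ k, if Q x (ω k) then (1:ℝ) else 0}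
        {ω : Fin n → V → A |
          ((1 - π x) + ε) * n ≤ ∑ k, if ¬ Q x (ω k) then (1:ℝ) else 0}
      linarith
    refine le_trans (Finset.sum_le_sum hterm) (le_of_eq ?_)
    rw [Finset.sum_const, Finset.card_univ, hMdef, nsmul_eq_mul]
    ring
  -- good event implies recovery
  have hgood : ∀ (n : ℕ) (ω : Fin n → V → A),
      (∀ (i j : V) (ab : A × A), |emp2 ω i j ab - marg2 P i j ab| < ε) →
      CLRecovers T ω := by
    intro n ω hω G hMax
    apply mst_unique T hT (fun i j => empMI ω i j) (fun i j => empMI_symm ω i j) ?_ G hMax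
    intro w wb u ub hEV
    have hbdd : BddBelow {x : ℝ | ∃ w' wb' u' ub' : V,
        EVtuple T w' wb' u' ub' ∧ x = mi P w' wb' - mi P u' ub'} := by
      apply BddBelow.mono ?_ (Set.finite_range
        (fun q : (V × V) × V × V => mi P q.1.1 q.1.2 - mi P q.2.1 q.2.2)).bddBelow
      rintro x ⟨w', wb', u', ub', _, rfl⟩
      exact ⟨((w', wb'), (u', ub')), rfl⟩
    have hmem : mi P w wb - mi P u ub ∈ {x : ℝ | ∃ w' wb' u' ub' : V,
        EVtuple T w' wb' u' ub' ∧ x = mi P w' wb' - mi P u' ub'} :=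
      ⟨w, wb, u, ub, hEV, rfl⟩
    have hgap : 2 * θ ≤ mi P w wb - mi P u ub := by
      have hle := csInf_le hbdd hmem
      have hth : θ = (1/2) * sInf {x : ℝ | ∃ w' wb' u' ub' : V,
          EVtuple T w' wb' u' ub' ∧ x = mi P w' wb' - mi P u' ub'} := by
        rw [hθdef]; rfl
      linarith
    have huub : |empMI ω u ub - mi P u ub| < θ := by
      apply hdfspec (u, ub) n ω
      intro ab
      exact lt_of_lt_of_le (hω u ub ab) (hεle (u, ub))
    have hwwb2 : |empMI ω w wb - mi P w wb| < θ := by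
      apply hdfspec (w, wb) n ω
      intro ab
      exact lt_of_lt_of_le (hω w wb ab) (hεle (w, wb))
    have ha := abs_lt.mp huub
    have hb := abs_lt.mp hwwb2
    linarith
  -- asymptotics
  set c : ℝ := θ ^ 2 / 72 with hcdef
  have hc0 : 0 < c := by rw [hcdef]; positivity
  have hlogρ : Real.log ρ < 0 := Real.log_neg hρ0 hρ1
  set s : ℝ := Real.exp (Real.log ρ / 2) with hsdef
  have hs0 : 0 < s := Real.exp_pos _
  have hs1 : s < 1 := by
    rw [hsdef]
    exact Real.exp_lt_one_iff.mpr (by linarith)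
  have hρs : ρ = s * s := by
    rw [hsdef, ← Real.exp_add,
      show Real.log ρ / 2 + Real.log ρ / 2 = Real.log ρ by ring, Real.exp_log hρ0]
  have hev1 : ∀ᶠ n : ℕ in Filter.atTop, M * s ^ n < 1 := by
    have h6 : Filter.Tendsto (fun n : ℕ => M * s ^ n) Filter.atTop (nhds (M * 0)) :=
      (tendsto_pow_atTop_nhds_zero_of_lt_one hs0.le hs1).const_mul M
    rw [mul_zero] at h6
    exact h6.eventually_lt_const one_pos
  have hev2 : ∀ᶠ n : ℕ in Filter.atTop,
      c / (Real.logb 2 (n : ℝ)) ^ 2 ≤ -Real.log ρ / 2 := by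
    have h3 : Filter.Tendsto (fun n : ℕ => Real.logb 2 (n : ℝ))
        Filter.atTop Filter.atTop :=
      (Real.tendsto_logb_atTop one_lt_two).comp tendsto_natCast_atTop_atTop
    have hnl : 0 < -Real.log ρ := by linarith
    set B : ℝ := Real.sqrt (2 * c / (-Real.log ρ)) + 1 with hBdef
    have hB0 : 0 < B := by
      rw [hBdef]
      positivity
    filter_upwards [h3.eventually_ge_atTop B] with n hn
    have hL0 : 0 < Real.logb 2 (n : ℝ) := lt_of_lt_of_le hB0 hn
    have hsq := Real.sq_sqrt (show (0:ℝ) ≤ 2 * c / (-Real.log ρ) by positivity)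
    have h4 : Real.sqrt (2 * c / (-Real.log ρ)) ≤ Real.logb 2 (n : ℝ) := by
      rw [hBdef] at hn
      linarith
    have hL2 : 2 * c / (-Real.log ρ) ≤ (Real.logb 2 (n : ℝ)) ^ 2 := by
      calc 2 * c / (-Real.log ρ)
          = Real.sqrt (2 * c / (-Real.log ρ)) ^ 2 := hsq.symm
        _ ≤ (Real.logb 2 (n : ℝ)) ^ 2 :=
            pow_le_pow_left₀ (Real.sqrt_nonneg _) h4 2
    rw [div_le_iff₀ hnl] at hL2
    rw [div_le_div_iff₀ (by positivity) two_pos]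
    calc c * 2 = 2 * c := by ring
      _ ≤ (Real.logb 2 (n : ℝ)) ^ 2 * (-Real.log ρ) := hL2
      _ = -Real.log ρ * (Real.logb 2 (n : ℝ)) ^ 2 := by ring
  obtain ⟨N0, hN0⟩ := Filter.eventually_atTop.mp (hev1.and hev2)
  set N : ℕ := max N0 2 with hNdef
  have hN2 : 2 ≤ N := le_max_right _ _
  have hNR : (0:ℝ) < N := by
    have : (2:ℝ) ≤ N := by exact_mod_cast hN2
    linarith
  set C : ℝ := θ * Real.sqrt N with hCdef
  have hC0 : 0 < C := by
    rw [hCdef]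
    exact mul_pos hθpos (Real.sqrt_pos.mpr hNR)
  refine ⟨C, hC0, ?_⟩
  intro δ hδ n h1 h2
  obtain ⟨hδ0, hδ1⟩ := hδ
  have hp3 : (3:ℝ) ≤ (Fintype.card V : ℝ) := by exact_mod_cast hcard
  have hlogpδ : 0 < Real.log ((Fintype.card V : ℝ) / δ) := by
    apply Real.log_pos
    rw [lt_div_iff₀ hδ0]
    nlinarith [hp3, hδ0.le, hδ1]
  rcases Nat.eq_zero_or_pos n with rfl | hn1
  · exfalso
    simp only [Nat.cast_zero] at h1 h2
    rw [Real.sqrt_zero, div_zero, sub_zero, zero_div] at h1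
    have hpos : 0 < 72 * Real.log ((Fintype.card V : ℝ) / δ) / θ ^ 2 := by positivity
    linarith
  have hnR : (0:ℝ) < n := by exact_mod_cast hn1
  have hsqn : 0 < Real.sqrt n := Real.sqrt_pos.mpr hnR
  have hNn : (N:ℝ) < n := by
    rw [hCdef] at h2
    have h9 : Real.sqrt N < Real.sqrt n := by
      by_contra h10
      push_neg at h10
      have h11 : θ ≤ θ * Real.sqrt N / Real.sqrt n := by
        rw [le_div_iff₀ hsqn]
        exact mul_le_mul_of_nonneg_left h10 hθpos.le
      linarith
    have := (Real.sqrt_lt_sqrt_iff hNR.le).mp h9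
    exact this
  have hnN : N ≤ n := by
    have : (N:ℝ) ≤ (n:ℝ) := hNn.le
    exact_mod_cast this
  obtain ⟨hev1n, hev2n⟩ := hN0 n (le_trans (le_max_left _ _) hnN)
  have hn2 : (2:ℝ) ≤ (n:ℝ) := by
    have : (2:ℕ) ≤ n := le_trans hN2 hnN
    exact_mod_cast this
  have hL0 : 0 < Real.logb 2 (n : ℝ) := Real.logb_pos one_lt_two (by linarith)
  have hD0 : 0 < θ - C / Real.sqrt n := by linarith
  have hDθ : θ - C / Real.sqrt n ≤ θ := by
    have : 0 ≤ C / Real.sqrt n := by positivity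
    linarith
  -- key bound on δ
  have hkey : Real.log ((Fintype.card V : ℝ) / δ)
      ≤ (n : ℝ) * c / (Real.logb 2 (n : ℝ)) ^ 2 := by
    rw [div_le_div_iff₀ (by positivity) (by positivity)] at h1
    rw [le_div_iff₀ (by positivity : (0:ℝ) < (Real.logb 2 (n : ℝ)) ^ 2), hcdef]
    have hD2θ : (θ - C / Real.sqrt n) ^ 2 ≤ θ ^ 2 := pow_le_pow_left₀ hD0.le hDθ 2
    have h15 : (n : ℝ) * (θ - C / Real.sqrt n) ^ 2 ≤ (n : ℝ) * θ ^ 2 :=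
      mul_le_mul_of_nonneg_left hD2θ hnR.le
    linarith
  have hδlb : Real.exp (-((n : ℝ) * c / (Real.logb 2 (n : ℝ)) ^ 2)) ≤ δ := by
    rw [Real.log_le_iff_le_exp (by positivity)] at hkey
    rw [div_le_iff₀ hδ0] at hkey
    have hE : 0 < Real.exp ((n : ℝ) * c / (Real.logb 2 (n : ℝ)) ^ 2) := Real.exp_pos _
    rw [show Real.exp (-((n : ℝ) * c / (Real.logb 2 (n : ℝ)) ^ 2))
        = 1 / Real.exp ((n : ℝ) * c / (Real.logb 2 (n : ℝ)) ^ 2) from by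
      rw [Real.exp_neg]; ring]
    rw [div_le_iff₀ hE]
    have h16 : Real.exp ((n : ℝ) * c / (Real.logb 2 (n : ℝ)) ^ 2) * δ
        = δ * Real.exp ((n : ℝ) * c / (Real.logb 2 (n : ℝ)) ^ 2) := mul_comm _ _
    linarith
  -- chain of inequalities
  have hchain : M * ρ ^ n ≤ δ := by
    have h12 : s ^ n = Real.exp ((n : ℝ) * (Real.log ρ / 2)) := by
      rw [hsdef, ← Real.exp_nat_mul]
    have hq : M * ρ ^ n ≤ Real.exp (-((n : ℝ) * c / (Real.logb 2 (n : ℝ)) ^ 2)) := by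
      calc M * ρ ^ n = (M * s ^ n) * s ^ n := by rw [hρs, mul_pow]; ring
        _ ≤ 1 * s ^ n := mul_le_mul_of_nonneg_right hev1n.le (pow_nonneg hs0.le n)
        _ = Real.exp ((n : ℝ) * (Real.log ρ / 2)) := by rw [one_mul, h12]
        _ ≤ Real.exp (-((n : ℝ) * c / (Real.logb 2 (n : ℝ)) ^ 2)) := by
            apply Real.exp_le_exp.mpr
            have h13 := mul_le_mul_of_nonneg_left hev2n (le_of_lt hnR)
            have h14 : (n : ℝ) * (c / (Real.logb 2 (n : ℝ)) ^ 2)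
                = (n : ℝ) * c / (Real.logb 2 (n : ℝ)) ^ 2 := by ring
            have h17 : (n : ℝ) * (Real.log ρ / 2) = -((n : ℝ) * (-Real.log ρ / 2)) := by
              ring
            rw [h17]
            apply neg_le_neg
            rw [← h14]
            exact h13
    linarith
  -- probability chain
  have hcompl := probn_compl P hP
    {ω : Fin n → V → A | ∀ (i j : V) (ab : A × A), |emp2 ω i j ab - marg2 P i j ab| < ε}
  have hsub1 : {ω : Fin n → V → A |
      ∀ (i j : V) (ab : A × A), |emp2 ω i j ab - marg2 P i j ab| < ε}
      ⊆ {ω | CLRecovers T ω} := fun ω hω => hgood n ω hω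
  have hsub2 : {ω : Fin n → V → A |
      ∀ (i j : V) (ab : A × A), |emp2 ω i j ab - marg2 P i j ab| < ε}ᶜ
      ⊆ ⋃ x : (V × V) × (A × A),
      ({ω : Fin n → V → A | (π x + ε) * n ≤ ∑ k, if Q x (ω k) then (1:ℝ) else 0}
       ∪ {ω : Fin n → V → A |
          ((1 - π x) + ε) * n ≤ ∑ k, if ¬ Q x (ω k) then (1:ℝ) else 0}) := by
    intro ω hω
    simp only [Set.mem_compl_iff, Set.mem_setOf_eq] at hω
    push_neg at hω
    obtain ⟨i, j, ab, habs⟩ := hω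
    have hcnt : emp2 ω i j ab
        = (∑ k, if Q ((i, j), ab) (ω k) then (1:ℝ) else 0) / n := rfl
    have hπx : π ((i, j), ab) = marg2 P i j ab := rfl
    have hflip : ∑ k, (if ¬ Q ((i, j), ab) (ω k) then (1:ℝ) else 0)
        = (n : ℝ) - ∑ k, (if Q ((i, j), ab) (ω k) then (1:ℝ) else 0) := by
      rw [eq_sub_iff_add_eq, ← Finset.sum_add_distrib]
      rw [show (n : ℝ) = ∑ _k : Fin n, (1:ℝ) from by
        rw [Finset.sum_const, Finset.card_univ, Fintype.card_fin, nsmul_eq_mul, mul_one]]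
      apply Finset.sum_congr rfl
      intro k _
      by_cases h : Q ((i, j), ab) (ω k)
      · rw [if_neg (not_not_intro h), if_pos h]; ring
      · rw [if_pos h, if_neg h]; ring
    apply Set.mem_iUnion.mpr
    refine ⟨((i, j), ab), ?_⟩
    rcases le_abs.mp habs with hcase | hcase
    · left
      simp only [Set.mem_setOf_eq]
      rw [hπx]
      have : marg2 P i j ab + ε ≤ emp2 ω i j ab := by linarith
      rw [hcnt] at this
      rw [le_div_iff₀ hnR] at this
      linarith
    · right
      simp only [Set.mem_setOf_eq]
      rw [hπx, hflip]
      have : emp2 ω i j ab ≤ marg2 P i j ab - ε := by linarith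
      rw [hcnt] at this
      rw [div_le_iff₀ hnR] at this
      have h18 : (1 - marg2 P i j ab + ε) * (n : ℝ)
          = (n : ℝ) - (marg2 P i j ab - ε) * (n : ℝ) := by ring
      linarith
  have hb1 : probn P n ({ω : Fin n → V → A |
      ∀ (i j : V) (ab : A × A), |emp2 ω i j ab - marg2 P i j ab| < ε}ᶜ) ≤ M * ρ ^ n :=
    le_trans (probn_mono P hP.1 hsub2) (hBadBound n)
  have hb2 : probn P n {ω : Fin n → V → A |
      ∀ (i j : V) (ab : A × A), |emp2 ω i j ab - marg2 P i j ab| < ε}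
      ≤ probn P n {ω | CLRecovers T ω} := probn_mono P hP.1 hsub1
  linarith

end TreePaper
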